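/- For positive semidefinite n×n complex matrices A and B and any real r with 0 ≤ r ≤ 1, tr(A^r) + tr(B^r) ≥ tr((A+B)^r). -/

import Mathlib

open Matrix
open scoped ComplexOrder

/-- `f` applied to a matrix via the spectral decomposition (junk value `0` if
the matrix is not Hermitian). -/
noncomputable def matFun {n : ℕ} (f : ℝ → ℝ) (A : Matrix (Fin n) (Fin n) ℂ) :
    Matrix (Fin n) (Fin n) ℂ :=
  if hA : A.IsHermitian then
    (hA.eigenvectorUnitary : Matrix (Fin n) (Fin n) ℂ) *
      Matrix.diagonal (fun i => (f (hA.eigenvalues i) : ℂ)) *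
      (star hA.eigenvectorUnitary : Matrix (Fin n) (Fin n) ℂ)
  else 0

/-- The eigenvalues of a Hermitian matrix, sorted in non-increasing order
(junk value `0` if the matrix is not Hermitian). -/
noncomputable def eigsDesc {n : ℕ} (A : Matrix (Fin n) (Fin n) ℂ) : Fin n → ℝ :=
  if hA : A.IsHermitian then (fun k => hA.eigenvalues (Tuple.sort hA.eigenvalues (Fin.rev k)))
  else 0

/-- The absolute value `|X| = (XᴴX)^{1/2}` of a matrix. -/
noncomputable def matAbs {n : ℕ} (X : Matrix (Fin n) (Fin n) ℂ) : Matrix (Fin n) (Fin n) ℂ :=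
  (Matrix.posSemidef_conjTranspose_mul_self X).1.eigenvectorUnitary *
    Matrix.diagonal ((↑) ∘ (Real.sqrt ∘ (Matrix.posSemidef_conjTranspose_mul_self X).1.eigenvalues) : Fin n → ℂ) *
    (star (Matrix.posSemidef_conjTranspose_mul_self X).1.eigenvectorUnitary : Matrix (Fin n) (Fin n) ℂ)

/-- The singular values of `X`, sorted in non-increasing order. -/
noncomputable def svalsDesc {n : ℕ} (X : Matrix (Fin n) (Fin n) ℂ) : Fin n → ℝ :=
  eigsDesc (matAbs X)

/-- Sum of the first `k` entries of a vector indexed by `Fin n`. -/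
noncomputable def kSum {n : ℕ} (μ : Fin n → ℝ) (k : ℕ) : ℝ :=
  ∑ j ∈ Finset.univ.filter (fun j : Fin n => (j : ℕ) < k), μ j

/-- The operator norm: the largest singular value. -/
noncomputable def opNorm {n : ℕ} (X : Matrix (Fin n) (Fin n) ℂ) : ℝ :=
  ⨆ i, svalsDesc X i

/-! ### Auxiliary material for the proof of McCarthy's inequality -/

namespace McCarthyAux

open Polynomial

variable {ι : Type*} [Fintype ι] [DecidableEq ι]
variable {κ : Type*} [Fintype κ] [DecidableEq κ]
variable {γ : Type*} [Fintype γ] [DecidableEq γ]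

lemma charmatrix_eq (N : Matrix ι ι ℂ) :
    charmatrix N = diagonal (fun _ => (X : ℂ[X])) - N.map (⇑Polynomial.C) := by
  apply Matrix.ext
  intro i j
  rw [charmatrix_apply]
  simp [Matrix.sub_apply, map_apply]

lemma charpoly_conj (E E' M : Matrix ι ι ℂ) (h1 : E * E' = 1) :
    (E' * M * E).charpoly = M.charpoly := by
  have h2 : E' * E = 1 := mul_eq_one_comm.mpr h1
  have hdiag : diagonal (fun _ => (X : ℂ[X])) = (X : ℂ[X]) • (1 : Matrix ι ι ℂ[X]) := by
    rw [smul_one_eq_diagonal]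
  have key : charmatrix (E' * M * E) =
      E'.map (⇑Polynomial.C) * charmatrix M * E.map (⇑Polynomial.C) := by
    rw [charmatrix_eq, charmatrix_eq, mul_sub, sub_mul, hdiag]
    congr 1
    · rw [mul_smul_comm, smul_mul_assoc, mul_one, ← Matrix.map_mul, h2,
        Matrix.map_one _ (map_zero _) (map_one _)]
    · rw [← Matrix.map_mul, ← Matrix.map_mul]
  rw [Matrix.charpoly, Matrix.charpoly, key, det_mul, det_mul]
  rw [mul_comm, ← mul_assoc, ← det_mul, ← Matrix.map_mul, h1,
    Matrix.map_one _ (map_zero _) (map_one _), det_one, one_mul]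

lemma charpoly_diagonal' (d : ι → ℂ) :
    (diagonal d).charpoly = ∏ i, (X - C (d i)) := by
  have : charmatrix (diagonal d) = diagonal (fun i => (X : ℂ[X]) - C (d i)) := by
    apply Matrix.ext
    intro i j
    by_cases h : i = j
    · subst h; rw [charmatrix_apply_eq]; simp
    · rw [charmatrix_apply_ne _ _ _ h]; simp [diagonal_apply_ne _ h]
  rw [Matrix.charpoly, this, det_diagonal]

lemma charpoly_zero' : (0 : Matrix ι ι ℂ).charpoly = X ^ (Fintype.card ι) := by
  have : (0 : Matrix ι ι ℂ) = diagonal (fun _ => 0) := by simp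
  rw [this, charpoly_diagonal']
  simp [Finset.prod_const, Finset.card_univ]

lemma my_charpoly_mul_comm (P Q : Matrix ι ι ℂ) :
    (P * Q).charpoly = (Q * P).charpoly := by
  classical
  set E : Matrix (ι ⊕ ι) (ι ⊕ ι) ℂ := fromBlocks 1 P 0 1 with hE
  set E' : Matrix (ι ⊕ ι) (ι ⊕ ι) ℂ := fromBlocks 1 (-P) 0 1 with hE'
  have h1 : E * E' = 1 := by
    simp [hE, hE', fromBlocks_multiply, ← fromBlocks_one]
  have hM1 : E' * (fromBlocks (P * Q) 0 Q 0) * E = fromBlocks 0 0 Q (Q * P) := by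
    simp [hE, hE', fromBlocks_multiply, Matrix.neg_mul, mul_assoc]
  have hc : (fromBlocks (P * Q) 0 Q 0).charpoly
      = (fromBlocks (0 : Matrix ι ι ℂ) 0 Q (Q * P)).charpoly := by
    rw [← hM1, charpoly_conj _ _ _ h1]
  rw [charpoly_fromBlocks_zero₁₂, charpoly_fromBlocks_zero₁₂, charpoly_zero'] at hc
  have hX : (X : ℂ[X]) ^ (Fintype.card ι) ≠ 0 := pow_ne_zero _ X_ne_zero
  exact mul_right_cancel₀ hX (by linear_combination hc)

/-- The multiset of eigenvalues of a Hermitian matrix. -/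
noncomputable def eigMS {M : Matrix ι ι ℂ} (hM : M.IsHermitian) : Multiset ℝ :=
  Finset.univ.val.map hM.eigenvalues

lemma charpoly_eq_prod {M : Matrix ι ι ℂ} (hM : M.IsHermitian) :
    M.charpoly = ((eigMS hM).map (fun x : ℝ => (X : ℂ[X]) - C (x : ℂ))).prod := by
  have hUs : (star hM.eigenvectorUnitary : Matrix ι ι ℂ) *
      (hM.eigenvectorUnitary : Matrix ι ι ℂ) = 1 := by
    exact_mod_cast hM.eigenvectorUnitary.2.1
  calc M.charpoly
      = ((hM.eigenvectorUnitary : Matrix ι ι ℂ) * diagonal (RCLike.ofReal ∘ hM.eigenvalues)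
          * (star hM.eigenvectorUnitary : Matrix ι ι ℂ)).charpoly := by
        conv_lhs => rw [hM.spectral_theorem, Unitary.conjStarAlgAut_apply]
    _ = (diagonal (RCLike.ofReal ∘ hM.eigenvalues)).charpoly := charpoly_conj _ _ _ hUs
    _ = _ := by
        rw [charpoly_diagonal']
        rw [eigMS, Multiset.map_map, Finset.prod_eq_multiset_prod]
        rfl

lemma eigMS_unique {M : Matrix ι ι ℂ} (hM : M.IsHermitian) (m : Multiset ℝ)
    (h : M.charpoly = (m.map (fun x : ℝ => (X : ℂ[X]) - C (x : ℂ))).prod) : eigMS hM = m := by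
  have h2 : ((eigMS hM).map (fun x : ℝ => ((x : ℂ)))) = (m.map (fun x : ℝ => ((x : ℂ)))) := by
    have heq := (charpoly_eq_prod hM).symm.trans h
    have hr := congrArg Polynomial.roots heq
    rwa [show ((eigMS hM).map (fun x : ℝ => (X : ℂ[X]) - C (x : ℂ))) =
        (((eigMS hM).map (fun x : ℝ => (x : ℂ))).map (fun z : ℂ => (X : ℂ[X]) - C z)) by
          rw [Multiset.map_map]; rfl,
      show (m.map (fun x : ℝ => (X : ℂ[X]) - C (x : ℂ))) =
        ((m.map (fun x : ℝ => (x : ℂ))).map (fun z : ℂ => (X : ℂ[X]) - C z)) by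
          rw [Multiset.map_map]; rfl,
      roots_multiset_prod_X_sub_C, roots_multiset_prod_X_sub_C] at hr
  exact Multiset.map_injective Complex.ofReal_injective h2

lemma eigMS_add_of_charpoly {M : Matrix γ γ ℂ} {P : Matrix ι ι ℂ} {Q : Matrix κ κ ℂ}
    (hM : M.IsHermitian) (hP : P.IsHermitian) (hQ : Q.IsHermitian)
    (h : M.charpoly = P.charpoly * Q.charpoly) : eigMS hM = eigMS hP + eigMS hQ := by
  apply eigMS_unique
  rw [h, charpoly_eq_prod hP, charpoly_eq_prod hQ, Multiset.map_add, Multiset.prod_add]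

lemma eigMS_eq_of_charpoly {M : Matrix γ γ ℂ} {P : Matrix ι ι ℂ}
    (hM : M.IsHermitian) (hP : P.IsHermitian)
    (h : M.charpoly = P.charpoly) : eigMS hM = eigMS hP := by
  apply eigMS_unique
  rw [h, charpoly_eq_prod hP]

lemma sum_f_eig_eq {M : Matrix ι ι ℂ} (hM : M.IsHermitian) (f : ℝ → ℝ) :
    ∑ i, f (hM.eigenvalues i) = ((eigMS hM).map f).sum := by
  rw [eigMS, Multiset.map_map, Finset.sum_eq_multiset_sum]
  rfl

/-- Peierls' inequality for concave functions. -/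
lemma peierls {f : ℝ → ℝ} (hf : ConcaveOn ℝ (Set.Ici 0) f) {M : Matrix ι ι ℂ}
    (hM : M.PosSemidef) (V : Matrix ι ι ℂ) (hV : V ∈ Matrix.unitaryGroup ι ℂ) :
    ∑ j, f (hM.1.eigenvalues j) ≤ ∑ i, f ((star V * M * V) i i).re := by
  classical
  set W := (hM.1.eigenvectorUnitary : Matrix ι ι ℂ) with hW
  set Q := star V * W with hQdef
  have hWu : W ∈ Matrix.unitaryGroup ι ℂ := hM.1.eigenvectorUnitary.2
  have hQu : Q ∈ Matrix.unitaryGroup ι ℂ := by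
    exact Submonoid.mul_mem _ (Unitary.star_mem hV) hWu
  set μ : ι → ℝ := hM.1.eigenvalues with hμ
  set p : ι → ι → ℝ := fun i j => Complex.normSq (Q i j) with hp
  have hrow : ∀ i, ∑ j, p i j = 1 := by
    intro i
    have h1 : (Q * star Q) i i = 1 := by
      rw [Matrix.mem_unitaryGroup_iff.mp hQu]; simp
    rw [Matrix.mul_apply] at h1
    have : ∀ j, Q i j * (star Q) j i = ((p i j : ℝ) : ℂ) := by
      intro j
      rw [Matrix.star_apply, Complex.star_def, Complex.mul_conj]
    rw [Finset.sum_congr rfl (fun j _ => this j)] at h1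
    exact_mod_cast h1
  have hcol : ∀ j, ∑ i, p i j = 1 := by
    intro j
    have h1 : (star Q * Q) j j = 1 := by
      rw [Matrix.mem_unitaryGroup_iff'.mp hQu]; simp
    rw [Matrix.mul_apply] at h1
    have : ∀ i, (star Q) j i * Q i j = ((p i j : ℝ) : ℂ) := by
      intro i
      rw [Matrix.star_apply, Complex.star_def, mul_comm, Complex.mul_conj]
    rw [Finset.sum_congr rfl (fun i _ => this i)] at h1
    exact_mod_cast h1
  have hdiag : ∀ i, ((star V * M * V) i i).re = ∑ j, p i j * μ j := by
    intro i
    have hMe : star V * M * V = Q * diagonal (RCLike.ofReal ∘ μ) * star Q := by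
      rw [hQdef, Matrix.star_mul, star_star]
      calc star V * M * V
          = star V * (W * diagonal (RCLike.ofReal ∘ μ) * star W) * V := by
            conv_lhs => rw [hM.1.spectral_theorem, Unitary.conjStarAlgAut_apply]
        _ = star V * W * diagonal (RCLike.ofReal ∘ μ) * (star W * V) := by
            noncomm_ring
    have : (star V * M * V) i i = ∑ j, ((p i j * μ j : ℝ) : ℂ) := by
      rw [hMe, Matrix.mul_apply]
      congr 1; funext j
      rw [Matrix.mul_diagonal, Matrix.star_apply, Complex.star_def]
      have : Q i j * (RCLike.ofReal ∘ μ) j * (starRingEnd ℂ) (Q i j)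
          = (Q i j * (starRingEnd ℂ) (Q i j)) * ((μ j : ℝ) : ℂ) := by
        simp [Function.comp]; ring
      rw [this, Complex.mul_conj]
      push_cast
      ring
    rw [this]
    push_cast
    simp
  calc ∑ j, f (μ j)
      = ∑ j, (∑ i, p i j) * f (μ j) := by
        apply Finset.sum_congr rfl; intro j _; rw [hcol j, one_mul]
    _ = ∑ i, ∑ j, p i j * f (μ j) := by
        rw [Finset.sum_comm]
        apply Finset.sum_congr rfl; intro j _
        rw [Finset.sum_mul]
    _ ≤ ∑ i, f ((star V * M * V) i i).re := by
        apply Finset.sum_le_sum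
        intro i _
        rw [hdiag i]
        have := hf.le_map_sum (t := Finset.univ) (w := p i) (p := μ)
          (fun j _ => Complex.normSq_nonneg _) (hrow i)
          (fun j _ => hM.eigenvalues_nonneg j)
        simpa [smul_eq_mul] using this

lemma diag_re_nonneg {P : Matrix ι ι ℂ} (hP : P.PosSemidef) (i : ι) : 0 ≤ (P i i).re := by
  exact (Complex.le_def.mp hP.diag_nonneg).1

/-- Concavity of the trace functional. -/
lemma trace_concave {f : ℝ → ℝ} (hf : ConcaveOn ℝ (Set.Ici 0) f) {M N K : Matrix ι ι ℂ}
    (hM : M.PosSemidef) (hN : N.PosSemidef) (hK : K.IsHermitian) (h : M + N = K + K) :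
    ∑ i, f (hM.1.eigenvalues i) + ∑ i, f (hN.1.eigenvalues i) ≤
      (∑ i, f (hK.eigenvalues i)) + ∑ i, f (hK.eigenvalues i) := by
  classical
  set V := (hK.eigenvectorUnitary : Matrix ι ι ℂ) with hVdef
  have hV : V ∈ Matrix.unitaryGroup ι ℂ := hK.eigenvectorUnitary.2
  set m : ι → ℝ := fun i => ((star V * M * V) i i).re with hm
  set nn : ι → ℝ := fun i => ((star V * N * V) i i).re with hn
  have hMV : (star V * M * V).PosSemidef := by
    have := hM.conjTranspose_mul_mul_same V
    rwa [← Matrix.star_eq_conjTranspose] at this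
  have hNV : (star V * N * V).PosSemidef := by
    have := hN.conjTranspose_mul_mul_same V
    rwa [← Matrix.star_eq_conjTranspose] at this
  have hdiagK : star V * K * V = diagonal (RCLike.ofReal ∘ hK.eigenvalues) :=
    by have := hK.conjStarAlgAut_star_eigenvectorUnitary
       simpa [hVdef] using this
  have hsum : ∀ i, m i + nn i = 2 * hK.eigenvalues i := by
    intro i
    have h2 : star V * M * V + star V * N * V
        = diagonal (RCLike.ofReal ∘ hK.eigenvalues) + diagonal (RCLike.ofReal ∘ hK.eigenvalues) := by
      rw [← hdiagK]
      have : star V * M * V + star V * N * V = star V * (M + N) * V := by noncomm_ring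
      rw [this, h]; noncomm_ring
    have h3 := congrArg (fun P : Matrix ι ι ℂ => (P i i).re) h2
    simpa [hm, hn, two_mul] using h3
  have key : ∀ i, f (m i) + f (nn i) ≤ 2 * f (hK.eigenvalues i) := by
    intro i
    have hmi : m i ∈ Set.Ici (0:ℝ) := diag_re_nonneg hMV i
    have hni : nn i ∈ Set.Ici (0:ℝ) := diag_re_nonneg hNV i
    have := hf.2 hmi hni (by norm_num : (0:ℝ) ≤ 1/2) (by norm_num : (0:ℝ) ≤ 1/2) (by norm_num)
    have hpt : (1/2 : ℝ) • m i + (1/2 : ℝ) • nn i = hK.eigenvalues i := by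
      have := hsum i; simp only [smul_eq_mul]; linarith
    rw [hpt] at this
    simp only [smul_eq_mul] at this
    linarith
  have h1 := peierls hf hM V hV
  have h2 := peierls hf hN V hV
  have h3 : ∑ i, (f (m i) + f (nn i)) ≤ ∑ i, 2 * f (hK.eigenvalues i) :=
    Finset.sum_le_sum (fun i _ => key i)
  rw [Finset.sum_add_distrib] at h3
  have h4 : ∑ i, 2 * f (hK.eigenvalues i)
      = (∑ i, f (hK.eigenvalues i)) + ∑ i, f (hK.eigenvalues i) := by
    rw [← Finset.sum_add_distrib]; apply Finset.sum_congr rfl; intro i _; ring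
  rw [h4] at h3
  have h1' : ∑ j, f (hM.1.eigenvalues j) ≤ ∑ i, f (m i) := h1
  have h2' : ∑ j, f (hN.1.eigenvalues j) ≤ ∑ i, f (nn i) := h2
  linarith

open scoped MatrixOrder in
/-- The core inequality: Rotfel'd-type subadditivity for sums of a concave function
of the eigenvalues, proved via the pinching trick. -/
lemma core {f : ℝ → ℝ} (hf : ConcaveOn ℝ (Set.Ici 0) f) (hf0 : f 0 = 0)
    {A B : Matrix ι ι ℂ} (hA : A.PosSemidef) (hB : B.PosSemidef) :
    ∑ i, f ((hA.add hB).1.eigenvalues i) ≤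
      ∑ i, f (hA.1.eigenvalues i) + ∑ i, f (hB.1.eigenvalues i) := by
  classical
  set S : Matrix (ι ⊕ ι) (ι ⊕ ι) ℂ := fromBlocks (CFC.sqrt A) 0 (CFC.sqrt B) 0 with hS
  have hSH : Sᴴ = fromBlocks (CFC.sqrt A) (CFC.sqrt B) 0 0 := by
    rw [hS, fromBlocks_conjTranspose, (CFC.sqrt_nonneg A).posSemidef.1, (CFC.sqrt_nonneg B).posSemidef.1]
    simp
  set M : Matrix (ι ⊕ ι) (ι ⊕ ι) ℂ := S * Sᴴ with hMdef
  have hMps : M.PosSemidef := posSemidef_self_mul_conjTranspose S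
  have hMblocks : M = fromBlocks A (CFC.sqrt A * (CFC.sqrt B)) (CFC.sqrt B * (CFC.sqrt A)) B := by
    rw [hMdef, hS, hSH, fromBlocks_multiply]
    simp [CFC.sqrt_mul_sqrt_self A hA.nonneg, CFC.sqrt_mul_sqrt_self B hB.nonneg]
  have hStS : Sᴴ * S = fromBlocks (A + B) 0 0 0 := by
    rw [hS, hSH, fromBlocks_multiply]
    simp [CFC.sqrt_mul_sqrt_self A hA.nonneg, CFC.sqrt_mul_sqrt_self B hB.nonneg]
  set U : Matrix (ι ⊕ ι) (ι ⊕ ι) ℂ := fromBlocks 1 0 0 (-1) with hU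
  have hUU : U * U = 1 := by
    rw [hU, fromBlocks_multiply]
    simp [← fromBlocks_one]
  have hUst : Uᴴ = U := by
    rw [hU, fromBlocks_conjTranspose]
    simp
  set M' : Matrix (ι ⊕ ι) (ι ⊕ ι) ℂ := U * M * U with hM'
  have hM'ps : M'.PosSemidef := by
    have := hMps.mul_mul_conjTranspose_same U
    rwa [hUst] at this
  have hcM' : M'.charpoly = M.charpoly := charpoly_conj U U M hUU
  set K : Matrix (ι ⊕ ι) (ι ⊕ ι) ℂ := fromBlocks A 0 0 B with hK
  have hKh : K.IsHermitian := by
    rw [Matrix.IsHermitian, hK, fromBlocks_conjTranspose, hA.1, hB.1]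
    simp
  have hMM' : M + M' = K + K := by
    rw [hM', hMblocks, hU, fromBlocks_multiply, fromBlocks_multiply, hK, fromBlocks_add,
      fromBlocks_add]
    simp
  have h0h : (0 : Matrix ι ι ℂ).IsHermitian := isHermitian_zero
  have heigM : eigMS hMps.1 = eigMS (hA.add hB).1 + eigMS h0h := by
    apply eigMS_add_of_charpoly
    rw [hMdef, my_charpoly_mul_comm, hStS, charpoly_fromBlocks_zero₂₁]
  have heigM' : eigMS hM'ps.1 = eigMS hMps.1 := eigMS_eq_of_charpoly _ _ hcM'
  have heigK : eigMS hKh = eigMS hA.1 + eigMS hB.1 := by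
    apply eigMS_add_of_charpoly
    rw [hK, charpoly_fromBlocks_zero₂₁]
  have heig0 : ((eigMS h0h).map f).sum = 0 := by
    rw [← sum_f_eig_eq]
    have : ∀ i, h0h.eigenvalues i = 0 := by
      intro i
      rw [h0h.eigenvalues_eq]
      simp
    simp [this, hf0]
  have htc := trace_concave hf hMps hM'ps hKh hMM'
  rw [sum_f_eig_eq hMps.1 f, sum_f_eig_eq hM'ps.1 f, sum_f_eig_eq hKh f, heigM', heigM,
    heigK, Multiset.map_add, Multiset.map_add, Multiset.sum_add, Multiset.sum_add, heig0] at htc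
  rw [sum_f_eig_eq (hA.add hB).1 f, sum_f_eig_eq hA.1 f, sum_f_eig_eq hB.1 f]
  linarith

lemma trace_matFun {n : ℕ} (f : ℝ → ℝ) {A : Matrix (Fin n) (Fin n) ℂ} (hA : A.IsHermitian) :
    ((matFun f A).trace).re = ∑ i, f (hA.eigenvalues i) := by
  rw [matFun, dif_pos hA, trace_mul_cycle]
  have hUs : (star hA.eigenvectorUnitary : Matrix (Fin n) (Fin n) ℂ) *
      (hA.eigenvectorUnitary : Matrix (Fin n) (Fin n) ℂ) = 1 := by
    exact_mod_cast hA.eigenvectorUnitary.2.1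
  rw [hUs, one_mul, trace_diagonal]
  simp

end McCarthyAux

/-- McCarthy: for PSD matrices and `0 ≤ r ≤ 1`, `tr(A^r) + tr(B^r) ≥ tr((A+B)^r)`. -/
theorem trace_rpow_add_ge {n : ℕ} (A B : Matrix (Fin n) (Fin n) ℂ)
    (hA : A.PosSemidef) (hB : B.PosSemidef) (r : ℝ) (hr0 : 0 ≤ r) (hr1 : r ≤ 1) :
    ((matFun (fun x => x ^ r) (A + B)).trace).re ≤
      ((matFun (fun x => x ^ r) A).trace).re + ((matFun (fun x => x ^ r) B).trace).re := by
  rw [McCarthyAux.trace_matFun _ (hA.add hB).1, McCarthyAux.trace_matFun _ hA.1,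
    McCarthyAux.trace_matFun _ hB.1]
  by_cases h0 : r = 0
  · subst h0
    simp [Real.rpow_zero]
  · exact McCarthyAux.core (Real.concaveOn_rpow hr0 hr1) (Real.zero_rpow h0) hA hB
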